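/- Let A₂ be the quotient of the free noncommutative ℤ/2-algebra on five generators a₁, a₂, a₃, a₄, a₅ by the two-sided ideal generated by the five elements a₄a₂, a₁a₄ + a₃a₅, a₅a₂, 1 + a₂a₁, and 1 + a₂a₃. Then in A₂ the images of a₄ and a₅ are zero, and A₂ is isomorphic as a ℤ/2-algebra to C₂, the quotient of the free noncommutative ℤ/2-algebra on three generators a₁, a₂, a₃ by the two-sided ideal generated by a₂a₁ − 1 and a₂a₃ − 1. -/

import Mathlib

noncomputable section

/-- The quotient of a ℤ/2-algebra by a ring congruence is again a ℤ/2-algebra,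
via the quotient map. -/
noncomputable instance ringConQuotientAlgebra
    {R : Type*} [Ring R] [Algebra (ZMod 2) R] (c : RingCon R) :
    Algebra (ZMod 2) c.Quotient :=
  RingHom.toAlgebra' ((RingCon.mk' c).comp (algebraMap (ZMod 2) R)) (by
    intro r x
    show (RingCon.mk' c) (algebraMap (ZMod 2) R r) * x = x * (RingCon.mk' c) (algebraMap (ZMod 2) R r)
    have hr : r = 0 ∨ r = 1 := by revert r; decide
    rcases hr with rfl | rfl <;> simp [map_zero, map_one])

/-- The generators `a₁, …, a₅` of the free ℤ/2-algebra on five letters. -/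
def a (i : Fin 5) : FreeAlgebra (ZMod 2) (Fin 5) := FreeAlgebra.ι (ZMod 2) i

/-- The relations `a₄a₂`, `a₁a₄ + a₃a₅`, `a₅a₂`, `1 + a₂a₁`, `1 + a₂a₃` for the
characteristic algebra of the knot `L₂`. -/
def relA2 : Set (FreeAlgebra (ZMod 2) (Fin 5)) :=
  {a 3 * a 1, a 0 * a 3 + a 2 * a 4, a 4 * a 1, 1 + a 1 * a 0, 1 + a 1 * a 2}

/-- The characteristic algebra `A₂` of the knot `L₂`. -/
def A2 := (TwoSidedIdeal.span relA2).ringCon.Quotient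

instance : Ring A2 := inferInstanceAs (Ring (TwoSidedIdeal.span relA2).ringCon.Quotient)
instance : Algebra (ZMod 2) A2 :=
  inferInstanceAs (Algebra (ZMod 2) (TwoSidedIdeal.span relA2).ringCon.Quotient)

/-- The quotient map onto `A₂`. -/
def q2 : FreeAlgebra (ZMod 2) (Fin 5) →+* A2 :=
  RingCon.mk' (TwoSidedIdeal.span relA2).ringCon

/-- The generators of the free ℤ/2-algebra on three letters. -/
def c (i : Fin 3) : FreeAlgebra (ZMod 2) (Fin 3) := FreeAlgebra.ι (ZMod 2) i

/-- The simplified characteristic algebra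
`C₂ = ℤ₂⟨a₁, a₂, a₃⟩/(a₂a₁ − 1, a₂a₃ − 1)`. -/
def C2 := (TwoSidedIdeal.span {c 1 * c 0 - 1, c 1 * c 2 - 1}).ringCon.Quotient

instance : Ring C2 :=
  inferInstanceAs (Ring (TwoSidedIdeal.span {c 1 * c 0 - 1, c 1 * c 2 - 1}).ringCon.Quotient)
instance : Algebra (ZMod 2) C2 :=
  inferInstanceAs
    (Algebra (ZMod 2) (TwoSidedIdeal.span {c 1 * c 0 - 1, c 1 * c 2 - 1}).ringCon.Quotient)

/- ### Auxiliary definitions and lemmas -/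

/-- Lift a ring hom killing the congruence to the quotient. -/
def myLift {R S : Type*} [Ring R] [Ring S] (cc : RingCon R) (f : R →+* S)
    (h : ∀ x y, cc x y → f x = f y) : cc.Quotient →+* S where
  toFun := Quotient.lift (f : R → S) h
  map_one' := map_one f
  map_mul' := fun x y => Quotient.inductionOn₂' x y fun u v => map_mul f u v
  map_zero' := map_zero f
  map_add' := fun x y => Quotient.inductionOn₂' x y fun u v => map_add f u v

lemma span_cond {R S : Type*} [Ring R] [Ring S] (s : Set R) (f : R →+* S)
    (hs : ∀ r ∈ s, f r = 0) :
    ∀ x y, (TwoSidedIdeal.span s).ringCon x y → f x = f y := by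
  intro x y hxy
  rw [TwoSidedIdeal.rel_iff] at hxy
  have hm := TwoSidedIdeal.mem_span_iff.mp hxy (TwoSidedIdeal.ker f)
    (fun r hr => (TwoSidedIdeal.mem_ker f).mpr (hs r hr))
  rw [TwoSidedIdeal.mem_ker f, map_sub, sub_eq_zero] at hm
  exact hm

lemma mk_eq_zero {R : Type*} [Ring R] (I : TwoSidedIdeal R) {x : R} (hx : x ∈ I) :
    RingCon.mk' I.ringCon x = 0 := by
  have : I.ringCon x 0 := by rw [TwoSidedIdeal.rel_iff, sub_zero]; exact hx
  exact Quotient.sound' this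

/-- The quotient map onto `C₂`. -/
def qc : FreeAlgebra (ZMod 2) (Fin 3) →+* C2 :=
  RingCon.mk' (TwoSidedIdeal.span {c 1 * c 0 - 1, c 1 * c 2 - 1}).ringCon

lemma C2_two : (1 : C2) + 1 = 0 := by
  have : ((1 : ZMod 2) + 1) = 0 := by decide
  calc (1 : C2) + 1 = algebraMap (ZMod 2) C2 (1 + 1) := by simp
    _ = 0 := by rw [this, map_zero]

lemma A2_two : (1 : A2) + 1 = 0 := by
  have : ((1 : ZMod 2) + 1) = 0 := by decide
  calc (1 : A2) + 1 = algebraMap (ZMod 2) A2 (1 + 1) := by simp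
    _ = 0 := by rw [this, map_zero]

/-- The algebra map `FreeAlgebra → C₂` sending the last two generators to `0`. -/
def φf : FreeAlgebra (ZMod 2) (Fin 5) →ₐ[ZMod 2] C2 :=
  FreeAlgebra.lift (ZMod 2) ![qc (c 0), qc (c 1), qc (c 2), 0, 0]

/-- The algebra map `FreeAlgebra (Fin 3) → A₂`. -/
def ψf : FreeAlgebra (ZMod 2) (Fin 3) →ₐ[ZMod 2] A2 :=
  FreeAlgebra.lift (ZMod 2) ![q2 (a 0), q2 (a 1), q2 (a 2)]

lemma q2_rel {r : FreeAlgebra (ZMod 2) (Fin 5)} (hr : r ∈ relA2) : q2 r = 0 :=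
  mk_eq_zero _ (TwoSidedIdeal.subset_span hr)

lemma qc_rel {r : FreeAlgebra (ZMod 2) (Fin 3)}
    (hr : r ∈ ({c 1 * c 0 - 1, c 1 * c 2 - 1} : Set (FreeAlgebra (ZMod 2) (Fin 3)))) :
    qc r = 0 :=
  mk_eq_zero _ (TwoSidedIdeal.subset_span hr)

lemma q2_a10 : q2 (a 1) * q2 (a 0) = 1 := by
  have h := q2_rel (r := 1 + a 1 * a 0) (by simp [relA2])
  rw [map_add, map_mul, map_one] at h
  have := A2_two
  linear_combination (norm := noncomm_ring) h - this

lemma q2_a3 : q2 (a 3) = 0 := by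
  have h31 : q2 (a 3) * q2 (a 1) = 0 := by
    have := q2_rel (r := a 3 * a 1) (by simp [relA2])
    rwa [map_mul] at this
  calc q2 (a 3) = q2 (a 3) * (q2 (a 1) * q2 (a 0)) := by rw [q2_a10, mul_one]
    _ = (q2 (a 3) * q2 (a 1)) * q2 (a 0) := by rw [mul_assoc]
    _ = 0 := by rw [h31, zero_mul]

lemma q2_a4 : q2 (a 4) = 0 := by
  have h41 : q2 (a 4) * q2 (a 1) = 0 := by
    have := q2_rel (r := a 4 * a 1) (by simp [relA2])
    rwa [map_mul] at this
  calc q2 (a 4) = q2 (a 4) * (q2 (a 1) * q2 (a 0)) := by rw [q2_a10, mul_one]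
    _ = (q2 (a 4) * q2 (a 1)) * q2 (a 0) := by rw [mul_assoc]
    _ = 0 := by rw [h41, zero_mul]

lemma φf_kills : ∀ r ∈ relA2, φf.toRingHom r = 0 := by
  have e0 : φf (a 0) = qc (c 0) := by simp [φf, a, FreeAlgebra.lift_ι_apply]
  have e1 : φf (a 1) = qc (c 1) := by simp [φf, a, FreeAlgebra.lift_ι_apply]
  have e2 : φf (a 2) = qc (c 2) := by simp [φf, a, FreeAlgebra.lift_ι_apply]
  have e3 : φf (a 3) = 0 := by simp [φf, a, FreeAlgebra.lift_ι_apply]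
  have e4 : φf (a 4) = 0 := by simp [φf, a, FreeAlgebra.lift_ι_apply]
  intro r hr
  simp only [relA2, Set.mem_insert_iff, Set.mem_singleton_iff] at hr
  have h10 : qc (c 1) * qc (c 0) = 1 := by
    have h := qc_rel (r := c 1 * c 0 - 1) (by simp)
    rw [map_sub, map_mul, map_one, sub_eq_zero] at h
    exact h
  have h12 : qc (c 1) * qc (c 2) = 1 := by
    have h := qc_rel (r := c 1 * c 2 - 1) (by simp)
    rw [map_sub, map_mul, map_one, sub_eq_zero] at h
    exact h
  rcases hr with rfl | rfl | rfl | rfl | rfl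
  · show φf _ = 0; rw [map_mul, e3, zero_mul]
  · show φf _ = 0; rw [map_add, map_mul, map_mul, e3, e4, mul_zero, mul_zero, add_zero]
  · show φf _ = 0; rw [map_mul, e4, zero_mul]
  · show φf _ = 0
    rw [map_add, map_one, map_mul, e1, e0, h10]
    exact C2_two
  · show φf _ = 0
    rw [map_add, map_one, map_mul, e1, e2, h12]
    exact C2_two

lemma ψf_kills : ∀ r ∈ ({c 1 * c 0 - 1, c 1 * c 2 - 1} :
    Set (FreeAlgebra (ZMod 2) (Fin 3))), ψf.toRingHom r = 0 := by
  have f0 : ψf (c 0) = q2 (a 0) := by simp [ψf, c, FreeAlgebra.lift_ι_apply]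
  have f1 : ψf (c 1) = q2 (a 1) := by simp [ψf, c, FreeAlgebra.lift_ι_apply]
  have f2 : ψf (c 2) = q2 (a 2) := by simp [ψf, c, FreeAlgebra.lift_ι_apply]
  intro r hr
  simp only [Set.mem_insert_iff, Set.mem_singleton_iff] at hr
  have h12 : q2 (a 1) * q2 (a 2) = 1 := by
    have h := q2_rel (r := 1 + a 1 * a 2) (by simp [relA2])
    rw [map_add, map_mul, map_one] at h
    linear_combination (norm := noncomm_ring) h - A2_two
  rcases hr with rfl | rfl
  · show ψf _ = 0; rw [map_sub, map_mul, map_one, f1, f0, q2_a10, sub_self]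
  · show ψf _ = 0; rw [map_sub, map_mul, map_one, f1, f2, h12, sub_self]

/-- The induced map `A₂ → C₂`. -/
def φ : A2 →+* C2 :=
  myLift _ φf.toRingHom (span_cond relA2 _ φf_kills)

/-- The induced map `C₂ → A₂`. -/
def ψ : C2 →+* A2 :=
  myLift _ ψf.toRingHom (span_cond _ _ ψf_kills)

lemma φ_q2 (x : FreeAlgebra (ZMod 2) (Fin 5)) : φ (q2 x) = φf x := rfl

lemma ψ_qc (x : FreeAlgebra (ZMod 2) (Fin 3)) : ψ (qc x) = ψf x := rfl

/-- `q2` as an algebra hom. -/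
def q2A : FreeAlgebra (ZMod 2) (Fin 5) →ₐ[ZMod 2] A2 :=
  { q2 with commutes' := fun _ => rfl }

/-- `qc` as an algebra hom. -/
def qcA : FreeAlgebra (ZMod 2) (Fin 3) →ₐ[ZMod 2] C2 :=
  { qc with commutes' := fun _ => rfl }

/-- `ψ` as an algebra hom. -/
def ψA : C2 →ₐ[ZMod 2] A2 :=
  { ψ with commutes' := fun r => ψf.commutes r }

/-- `φ` as an algebra hom. -/
def φA : A2 →ₐ[ZMod 2] C2 :=
  { φ with commutes' := fun r => φf.commutes r }

lemma left_comp : (ψA.comp φf) = q2A := by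
  apply FreeAlgebra.hom_ext
  funext i
  show ψ (φf (FreeAlgebra.ι (ZMod 2) i)) = q2 (FreeAlgebra.ι (ZMod 2) i)
  fin_cases i
  · show ψ (φf (a 0)) = q2 (a 0)
    have : φf (a 0) = qc (c 0) := by simp [φf, a, FreeAlgebra.lift_ι_apply]
    rw [this, ψ_qc]; simp [ψf, c, FreeAlgebra.lift_ι_apply]
  · show ψ (φf (a 1)) = q2 (a 1)
    have : φf (a 1) = qc (c 1) := by simp [φf, a, FreeAlgebra.lift_ι_apply]
    rw [this, ψ_qc]; simp [ψf, c, FreeAlgebra.lift_ι_apply]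
  · show ψ (φf (a 2)) = q2 (a 2)
    have : φf (a 2) = qc (c 2) := by simp [φf, a, FreeAlgebra.lift_ι_apply]
    rw [this, ψ_qc]; simp [ψf, c, FreeAlgebra.lift_ι_apply]
  · show ψ (φf (a 3)) = q2 (a 3)
    have : φf (a 3) = 0 := by simp [φf, a, FreeAlgebra.lift_ι_apply]
    rw [this, map_zero, q2_a3]
  · show ψ (φf (a 4)) = q2 (a 4)
    have : φf (a 4) = 0 := by simp [φf, a, FreeAlgebra.lift_ι_apply]
    rw [this, map_zero, q2_a4]

lemma right_comp : (φA.comp ψf) = qcA := by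
  apply FreeAlgebra.hom_ext
  funext i
  show φ (ψf (FreeAlgebra.ι (ZMod 2) i)) = qc (FreeAlgebra.ι (ZMod 2) i)
  fin_cases i
  · show φ (ψf (c 0)) = qc (c 0)
    have : ψf (c 0) = q2 (a 0) := by simp [ψf, c, FreeAlgebra.lift_ι_apply]
    rw [this, φ_q2]; simp [φf, a, FreeAlgebra.lift_ι_apply]
  · show φ (ψf (c 1)) = qc (c 1)
    have : ψf (c 1) = q2 (a 1) := by simp [ψf, c, FreeAlgebra.lift_ι_apply]
    rw [this, φ_q2]; simp [φf, a, FreeAlgebra.lift_ι_apply]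
  · show φ (ψf (c 2)) = qc (c 2)
    have : ψf (c 2) = q2 (a 2) := by simp [ψf, c, FreeAlgebra.lift_ι_apply]
    rw [this, φ_q2]; simp [φf, a, FreeAlgebra.lift_ι_apply]

/-- The ring equivalence `A₂ ≃+* C₂`. -/
def e : A2 ≃+* C2 where
  toFun := φ
  invFun := ψ
  left_inv := by
    intro x
    refine Quotient.inductionOn' x fun y => ?_
    show ψ (φ (q2 y)) = q2 y
    rw [φ_q2]
    have := congrFun (congrArg (fun (f : FreeAlgebra (ZMod 2) (Fin 5) →ₐ[ZMod 2] A2)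
      => (f : FreeAlgebra (ZMod 2) (Fin 5) → A2)) left_comp) y
    exact this
  right_inv := by
    intro x
    refine Quotient.inductionOn' x fun y => ?_
    show φ (ψ (qc y)) = qc y
    rw [ψ_qc]
    have := congrFun (congrArg (fun (f : FreeAlgebra (ZMod 2) (Fin 3) →ₐ[ZMod 2] C2)
      => (f : FreeAlgebra (ZMod 2) (Fin 3) → C2)) right_comp) y
    exact this
  map_mul' := map_mul φ
  map_add' := map_add φ

/-- In `A₂` the images of `a₄` and `a₅` vanish, and `A₂` is isomorphic as a
ℤ/2-algebra to `C₂ = ℤ₂⟨a₁, a₂, a₃⟩/(1 = a₂a₁ = a₂a₃)`. -/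
theorem charAlgebraL2_simplification :
    q2 (a 3) = 0 ∧ q2 (a 4) = 0 ∧ Nonempty (A2 ≃ₐ[ZMod 2] C2) := by
  refine ⟨q2_a3, q2_a4, ⟨AlgEquiv.ofRingEquiv (f := e) fun x => ?_⟩⟩
  show φ (algebraMap (ZMod 2) A2 x) = algebraMap (ZMod 2) C2 x
  exact φA.commutes x
end
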